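/- arXiv:1302.5281 — 2 statements merged into one kernel-verified Lean document; each statement's English description precedes it below -/
import Mathlib

section
/- Let A, B be nonempty finite types, λ > 1 a real number, and ρ a density matrix indexed by A×B. Then the infimum, over positive definite density matrices σ indexed by B, of D_λ(ρ ‖ 1_A⊗σ) equals (λ/(λ−1))·ln Tr[ (Tr_A(ρ^λ))^{1/λ} ]. (This expresses K_λ(A⟩B)_ρ in closed form; equivalently K_λ(A⟩B)_ρ = (λ/(1−λ))·E₀(λ⁻¹−1) where E₀(s) := −ln Tr[ (Tr_A(ρ^{1/(s+1)}))^{s+1} ].) -/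
open scoped Kronecker
open Matrix
open scoped ComplexOrder

/-- Apply a real function to a Hermitian matrix via the functional calculus
(spectral decomposition); returns 0 for non-Hermitian input. -/
noncomputable def matFun {n : Type*} [Fintype n] [DecidableEq n]
    (M : Matrix n n ℂ) (f : ℝ → ℝ) : Matrix n n ℂ :=
  if h : M.IsHermitian then
    (h.eigenvectorUnitary : Matrix n n ℂ) *
      Matrix.diagonal (fun i => (f (h.eigenvalues i) : ℂ)) *
      (star (h.eigenvectorUnitary : Matrix n n ℂ))
  else 0

/-- Real power of a (Hermitian positive semidefinite) matrix, with the
convention `0 ^ t = 0` for every real `t`. -/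
noncomputable def mpow {n : Type*} [Fintype n] [DecidableEq n]
    (M : Matrix n n ℂ) (t : ℝ) : Matrix n n ℂ :=
  matFun M (fun x => if x = 0 then 0 else x ^ t)

/-- Real part of the trace. -/
noncomputable def trR {n : Type*} [Fintype n] (M : Matrix n n ℂ) : ℝ :=
  (Matrix.trace M).re

/-- Partial trace over the first tensor factor. -/
noncomputable def ptrA {A B : Type*} [Fintype A]
    (M : Matrix (A × B) (A × B) ℂ) : Matrix B B ℂ :=
  Matrix.of fun b b' => ∑ a : A, M (a, b) (a, b')

/-- Quantum Rényi divergence of order `lam`. -/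
noncomputable def renyiD {n : Type*} [Fintype n] [DecidableEq n]
    (lam : ℝ) (X Y : Matrix n n ℂ) : ℝ :=
  (1 / (lam - 1)) * Real.log (trR (mpow X lam * mpow Y (1 - lam)))

/-- The quantity `K_lam(A⟩B)_ρ`: infimum over positive definite density
matrices `σ` on `B` of `D_lam(ρ ‖ 1_A ⊗ σ)`. -/
noncomputable def Kinf {A B : Type*} [Fintype A] [Fintype B]
    [DecidableEq A] [DecidableEq B]
    (lam : ℝ) (ρ : Matrix (A × B) (A × B) ℂ) : ℝ :=
  ⨅ σ : {σ : Matrix B B ℂ // σ.PosDef ∧ σ.trace = 1},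
    renyiD lam ρ ((1 : Matrix A A ℂ) ⊗ₖ (σ : Matrix B B ℂ))

/-- The CPTP map determined by a finite family of Kraus operators. -/
noncomputable def krausMap {ι n m : Type*} [Fintype ι] [Fintype n] [Fintype m]
    (K : ι → Matrix m n ℂ) (X : Matrix n n ℂ) : Matrix m m ℂ :=
  ∑ j, K j * X * (K j)ᴴ

/-- Trace of the positive part of a Hermitian matrix. -/
noncomputable def trPos {n : Type*} [Fintype n] [DecidableEq n]
    (X : Matrix n n ℂ) : ℝ :=
  if h : X.IsHermitian then ∑ i, max (h.eigenvalues i) 0 else 0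

/-- Binary Rényi quantity `𝔻_lam(α‖β)`. -/
noncomputable def binD (lam α β : ℝ) : ℝ :=
  (1 / (lam - 1)) *
    Real.log (α ^ lam * β ^ (1 - lam) + (1 - α) ^ lam * (β⁻¹ - β) ^ (1 - lam))

section Aux
variable {n : Type*} [Fintype n] [DecidableEq n]

lemma isHermitian_conj_diag (U : Matrix n n ℂ) (d : n → ℝ) :
    (U * Matrix.diagonal (fun i => (d i : ℂ)) * star U).IsHermitian := by
  unfold Matrix.IsHermitian
  simp [Matrix.star_eq_conjTranspose, Matrix.conjTranspose_mul,
    Matrix.diagonal_conjTranspose, mul_assoc]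
  congr 1
  ext i
  simp [Complex.conj_ofReal]

lemma matFun_conj (U : Matrix n n ℂ) (hU : U ∈ Matrix.unitaryGroup n ℂ)
    (d : n → ℝ) (f : ℝ → ℝ) :
    matFun (U * Matrix.diagonal (fun i => (d i : ℂ)) * star U) f
      = U * Matrix.diagonal (fun i => (f (d i) : ℂ)) * star U := by
  have hX1 : (U * Matrix.diagonal (fun i => (d i : ℂ)) * star U).IsHermitian :=
    isHermitian_conj_diag U d
  rw [matFun, dif_pos hX1]
  set E : Matrix n n ℂ := (hX1.eigenvectorUnitary : Matrix n n ℂ) with hE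
  set e : n → ℝ := hX1.eigenvalues with he
  have hE1 : star E * E = 1 := Matrix.mem_unitaryGroup_iff'.mp hX1.eigenvectorUnitary.2
  have hE2 : E * star E = 1 := Matrix.mem_unitaryGroup_iff.mp hX1.eigenvectorUnitary.2
  have hU1 : star U * U = 1 := Matrix.mem_unitaryGroup_iff'.mp hU
  have hU2 : U * star U = 1 := Matrix.mem_unitaryGroup_iff.mp hU
  set W : Matrix n n ℂ := star E * U with hW
  have hspec : E * Matrix.diagonal (fun i => (e i : ℂ)) * star E
      = U * Matrix.diagonal (fun i => (d i : ℂ)) * star U := by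
    have h := hX1.spectral_theorem
    exact h.symm
  have key : Matrix.diagonal (fun i => (e i : ℂ)) * W
      = W * Matrix.diagonal (fun i => (d i : ℂ)) := by
    calc Matrix.diagonal (fun i => (e i : ℂ)) * W
        = star E * (E * Matrix.diagonal (fun i => (e i : ℂ)) * star E) * U := by
          rw [hW]; rw [show star E * (E * Matrix.diagonal (fun i => (e i : ℂ)) * star E) * U
            = (star E * E) * Matrix.diagonal (fun i => (e i : ℂ)) * (star E * U) by
              noncomm_ring, hE1, one_mul]
      _ = star E * (U * Matrix.diagonal (fun i => (d i : ℂ)) * star U) * U := by rw [hspec]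
      _ = W * Matrix.diagonal (fun i => (d i : ℂ)) := by
          rw [hW, show star E * (U * Matrix.diagonal (fun i => (d i : ℂ)) * star U) * U
            = (star E * U) * Matrix.diagonal (fun i => (d i : ℂ)) * (star U * U) by
              noncomm_ring, hU1, mul_one]
  have key2 : ∀ i j, (e i : ℂ) * W i j = W i j * (d j : ℂ) := by
    intro i j
    have := congrFun (congrFun key i) j
    simpa [Matrix.diagonal_mul, Matrix.mul_diagonal] using this
  have key4 : Matrix.diagonal (fun i => (f (e i) : ℂ)) * W
      = W * Matrix.diagonal (fun i => (f (d i) : ℂ)) := by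
    ext i j
    simp only [Matrix.diagonal_mul, Matrix.mul_diagonal]
    rcases eq_or_ne (W i j) 0 with h | h
    · simp [h]
    · have hed : e i = d j := by
        have h2 := key2 i j
        rw [mul_comm (W i j) ((d j : ℂ))] at h2
        have := mul_right_cancel₀ h h2
        exact_mod_cast this
      rw [hed, mul_comm]
  have hEW : E * W = U := by rw [hW, ← mul_assoc, hE2, one_mul]
  have hWE : W * star U = star E := by rw [hW, mul_assoc, hU2, mul_one]
  calc E * Matrix.diagonal (fun i => (f (e i) : ℂ)) * star E
      = E * (Matrix.diagonal (fun i => (f (e i) : ℂ)) * W) * star U := by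
        rw [← hWE]; noncomm_ring
    _ = (E * W) * Matrix.diagonal (fun i => (f (d i) : ℂ)) * star U := by
        rw [key4]; noncomm_ring
    _ = U * Matrix.diagonal (fun i => (f (d i) : ℂ)) * star U := by rw [hEW]

end Aux

section Aux2
variable {n : Type*} [Fintype n] [DecidableEq n]

lemma mpow_conj (U : Matrix n n ℂ) (hU : U ∈ Matrix.unitaryGroup n ℂ)
    (d : n → ℝ) (t : ℝ) (ht : t ≠ 0) :
    mpow (U * Matrix.diagonal (fun i => (d i : ℂ)) * star U) t
      = U * Matrix.diagonal (fun i => ((d i ^ t : ℝ) : ℂ)) * star U := by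
  rw [mpow, matFun_conj U hU]
  have h : ∀ i, (((if d i = 0 then 0 else d i ^ t : ℝ)) : ℂ) = ((d i ^ t : ℝ) : ℂ) := by
    intro i
    by_cases h : d i = 0
    · rw [if_pos h, h, Real.zero_rpow ht]
    · rw [if_neg h]
  simp only [h]

lemma star_kron {A B : Type*} [Fintype A] [Fintype B]
    (X : Matrix A A ℂ) (Y : Matrix B B ℂ) :
    star (X ⊗ₖ Y) = star X ⊗ₖ star Y := by
  ext p q
  simp [Matrix.star_eq_conjTranspose, Matrix.conjTranspose_apply,
    Matrix.kroneckerMap_apply, star_mul']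

lemma one_kron_unitary {A B : Type*} [Fintype A] [Fintype B] [DecidableEq A] [DecidableEq B]
    {V : Matrix B B ℂ} (hV : V ∈ Matrix.unitaryGroup B ℂ) :
    (1 : Matrix A A ℂ) ⊗ₖ V ∈ Matrix.unitaryGroup (A × B) ℂ := by
  rw [Matrix.mem_unitaryGroup_iff, star_kron, ← Matrix.mul_kronecker_mul,
    Matrix.mem_unitaryGroup_iff.mp hV]
  simp [Matrix.one_kronecker_one]

lemma one_kron_diag {A B : Type*} [Fintype A] [Fintype B] [DecidableEq A] [DecidableEq B]
    (s : B → ℂ) :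
    (1 : Matrix A A ℂ) ⊗ₖ Matrix.diagonal s
      = Matrix.diagonal (fun p : A × B => s p.2) := by
  rw [show (1 : Matrix A A ℂ) = Matrix.diagonal (fun _ => 1) by simp,
    Matrix.diagonal_kronecker_diagonal]
  simp

lemma trace_conj (U : Matrix n n ℂ) (hU : U ∈ Matrix.unitaryGroup n ℂ) (x : n → ℂ) :
    Matrix.trace (U * Matrix.diagonal x * star U) = ∑ i, x i := by
  rw [Matrix.trace_mul_cycle, Matrix.mem_unitaryGroup_iff'.mp hU, Matrix.one_mul,
    Matrix.trace_diagonal]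

lemma trace_conj_same (V : Matrix n n ℂ) (hV : V ∈ Matrix.unitaryGroup n ℂ) (x y : n → ℂ) :
    Matrix.trace (V * Matrix.diagonal x * star V * (V * Matrix.diagonal y * star V))
      = ∑ i, x i * y i := by
  have h1 : V * Matrix.diagonal x * star V * (V * Matrix.diagonal y * star V)
      = V * Matrix.diagonal (fun i => x i * y i) * star V := by
    rw [← Matrix.diagonal_mul_diagonal]
    calc V * Matrix.diagonal x * star V * (V * Matrix.diagonal y * star V)
        = V * Matrix.diagonal x * (star V * V) * Matrix.diagonal y * star V := by
          noncomm_ring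
      _ = V * (Matrix.diagonal x * Matrix.diagonal y) * star V := by
          rw [Matrix.mem_unitaryGroup_iff'.mp hV]; noncomm_ring
  rw [h1, trace_conj _ hV]

lemma trace_diag_mul (x : n → ℂ) (N : Matrix n n ℂ) :
    Matrix.trace (Matrix.diagonal x * N) = ∑ i, x i * N i i := by
  unfold Matrix.trace
  congr 1
  funext i
  simp [Matrix.diag, Matrix.diagonal_mul]

lemma trace_conj_pair (U V : Matrix n n ℂ) (x y : n → ℝ) :
    (Matrix.trace (U * Matrix.diagonal (fun i => (x i : ℂ)) * star U *
        (V * Matrix.diagonal (fun j => (y j : ℂ)) * star V))).re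
      = ∑ i, ∑ j, x i * y j * Complex.normSq ((star U * V) i j) := by
  set W : Matrix n n ℂ := star U * V with hW
  set Dx : Matrix n n ℂ := Matrix.diagonal (fun i => (x i : ℂ)) with hDx
  set Dy : Matrix n n ℂ := Matrix.diagonal (fun j => (y j : ℂ)) with hDy
  have hsW : star W = star V * U := by rw [hW, Matrix.star_mul, star_star]
  have h1 : U * Dx * star U * (V * Dy * star V) = U * (Dx * star U * (V * Dy * star V)) := by
    simp only [Matrix.mul_assoc]
  have h2 : Dx * star U * (V * Dy * star V) * U = Dx * (W * (Dy * star W)) := by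
    rw [hsW, hW]; simp only [Matrix.mul_assoc]
  rw [h1, Matrix.trace_mul_comm, h2, trace_diag_mul]
  have h3 : ∀ i, (W * (Dy * star W)) i i = ∑ j, W i j * ((y j : ℂ) * star (W i j)) := by
    intro i
    rw [Matrix.mul_apply]
    congr 1
    funext j
    rw [hDy, Matrix.diagonal_mul, Matrix.star_apply]
  have h4 : ∀ i j, ((x i : ℂ) * (W i j * ((y j : ℂ) * star (W i j))))
      = ((x i * y j * Complex.normSq (W i j) : ℝ) : ℂ) := by
    intro i j
    have : ((x i : ℂ) * (W i j * ((y j : ℂ) * star (W i j))))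
        = (x i : ℂ) * (y j : ℂ) * (W i j * star (W i j)) := by ring
    rw [this, Complex.star_def, Complex.mul_conj]
    push_cast
    ring
  simp only [h3, Finset.mul_sum, h4]
  rw [show (∑ i, ∑ j, ((x i * y j * Complex.normSq (W i j) : ℝ) : ℂ))
      = ((∑ i, ∑ j, x i * y j * Complex.normSq (W i j) : ℝ) : ℂ) by push_cast; rfl,
    Complex.ofReal_re]


end Aux2

section Aux3
variable {n : Type*} [Fintype n] [DecidableEq n]

lemma isHermitian_conj_diag' (U : Matrix n n ℂ) (d : n → ℝ) :
    (U * Matrix.diagonal (fun i => (d i : ℂ)) * star U).IsHermitian := by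
  unfold Matrix.IsHermitian
  simp [Matrix.star_eq_conjTranspose, Matrix.conjTranspose_mul,
    Matrix.diagonal_conjTranspose, mul_assoc]
  congr 1
  ext i
  simp [Complex.conj_ofReal]

lemma posDef_conj (U : Matrix n n ℂ) (hU : U ∈ Matrix.unitaryGroup n ℂ)
    (d : n → ℝ) (hd : ∀ i, 0 < d i) :
    (U * Matrix.diagonal (fun i => (d i : ℂ)) * star U).PosDef := by
  have hD : (Matrix.diagonal (fun i => ((d i : ℝ) : ℂ))).PosDef :=
    Matrix.PosDef.diagonal (fun i => by exact_mod_cast hd i)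
  refine Matrix.posDef_iff_dotProduct_mulVec.mpr ⟨isHermitian_conj_diag' U d, fun x hx => ?_⟩
  have hy : star U *ᵥ x ≠ 0 := by
    intro h0
    apply hx
    have h1 : U *ᵥ (star U *ᵥ x) = x := by
      rw [Matrix.mulVec_mulVec, Matrix.mem_unitaryGroup_iff.mp hU, Matrix.one_mulVec]
    rw [h0, Matrix.mulVec_zero] at h1
    exact h1.symm
  have h2 := (Matrix.posDef_iff_dotProduct_mulVec.mp hD).2 hy
  have hUe : (star U)ᴴ = U := by
    rw [Matrix.star_eq_conjTranspose, Matrix.conjTranspose_conjTranspose]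
  simpa only [star_mulVec, dotProduct_mulVec, vecMul_vecMul,
    Matrix.star_eq_conjTranspose, Matrix.conjTranspose_conjTranspose,
    Matrix.mul_assoc] using h2

lemma unitary_row_sum {W : Matrix n n ℂ} (hW : W * star W = 1) (i : n) :
    ∑ j, Complex.normSq (W i j) = 1 := by
  have h := congrFun (congrFun hW i) i
  rw [Matrix.mul_apply] at h
  have h1 : ∀ j, W i j * star W j i = ((Complex.normSq (W i j) : ℝ) : ℂ) := by
    intro j
    rw [Matrix.star_apply, Complex.star_def, Complex.mul_conj]
  simp only [h1] at h
  have h2 : ((∑ j, Complex.normSq (W i j) : ℝ) : ℂ) = 1 := by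
    push_cast
    rw [h, Matrix.one_apply_eq]
  exact_mod_cast h2

lemma unitary_col_sum {W : Matrix n n ℂ} (hW : star W * W = 1) (j : n) :
    ∑ i, Complex.normSq (W i j) = 1 := by
  have h := congrFun (congrFun hW j) j
  rw [Matrix.mul_apply] at h
  have h1 : ∀ i, star W j i * W i j = ((Complex.normSq (W i j) : ℝ) : ℂ) := by
    intro i
    rw [Matrix.star_apply, Complex.star_def, mul_comm, Complex.mul_conj]
  simp only [h1] at h
  have h2 : ((∑ i, Complex.normSq (W i j) : ℝ) : ℂ) = 1 := by
    push_cast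
    rw [h, Matrix.one_apply_eq]
  exact_mod_cast h2

end Aux3

section Aux4
variable {A B : Type*} [Fintype A] [Fintype B] [DecidableEq A] [DecidableEq B]

lemma ptrA_trace (X : Matrix (A × B) (A × B) ℂ) :
    Matrix.trace (ptrA X) = Matrix.trace X := by
  unfold ptrA
  rw [Matrix.trace, Matrix.trace]
  simp only [Matrix.diag, Matrix.of_apply]
  rw [Fintype.sum_prod_type]
  exact Finset.sum_comm

lemma trace_mul_one_kron (X : Matrix (A × B) (A × B) ℂ) (T : Matrix B B ℂ) :
    Matrix.trace (X * ((1 : Matrix A A ℂ) ⊗ₖ T)) = Matrix.trace (ptrA X * T) := by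
  have h1 : ∀ p : A × B, (X * ((1 : Matrix A A ℂ) ⊗ₖ T)) p p
      = ∑ b', X p (p.1, b') * T b' p.2 := by
    intro p
    rw [Matrix.mul_apply, Fintype.sum_prod_type]
    have h0 : ∀ a' b', X p (a', b') * (((1 : Matrix A A ℂ) ⊗ₖ T) (a', b') p)
        = if a' = p.1 then X p (a', b') * T b' p.2 else 0 := by
      intro a' b'
      by_cases h : a' = p.1
      · simp [Matrix.kroneckerMap_apply, Matrix.one_apply, h]
      · simp [Matrix.kroneckerMap_apply, Matrix.one_apply, h]
    simp only [h0]
    rw [Finset.sum_comm]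
    simp
  rw [Matrix.trace, Matrix.trace]
  simp only [Matrix.diag, h1]
  rw [Fintype.sum_prod_type, Finset.sum_comm]
  congr 1
  funext b
  rw [Matrix.mul_apply, Finset.sum_comm]
  congr 1
  funext b'
  unfold ptrA
  rw [Matrix.of_apply, Finset.sum_mul]

lemma ptrA_posSemidef {X : Matrix (A × B) (A × B) ℂ} (hX : X.PosSemidef) :
    (ptrA X).PosSemidef := by
  rw [Matrix.posSemidef_iff_dotProduct_mulVec]
  constructor
  · unfold Matrix.IsHermitian
    ext b b'
    rw [Matrix.conjTranspose_apply]
    unfold ptrA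
    rw [Matrix.of_apply, Matrix.of_apply, star_sum]
    congr 1
    funext a
    exact hX.1.apply (a, b) (a, b')
  · intro v
    classical
    set w : A → (A × B) → ℂ := fun a p => if p.1 = a then v p.2 else 0 with hwdef
    have ha : ∀ a : A, dotProduct (star (w a)) (X *ᵥ w a)
        = ∑ b, star (v b) * ∑ b', X (a, b) (a, b') * v b' := by
      intro a
      have hmv : ∀ p : A × B, (X *ᵥ w a) p = ∑ b', X p (a, b') * v b' := by
        intro p
        simp only [Matrix.mulVec, dotProduct, hwdef]
        rw [Fintype.sum_prod_type]
        simp [mul_ite, mul_zero, Finset.sum_ite_eq', Finset.mem_univ]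
      simp only [dotProduct, Pi.star_apply, hmv, hwdef]
      rw [Fintype.sum_prod_type]
      simp [apply_ite (starRingEnd ℂ), ite_mul, zero_mul, Finset.sum_ite_eq', Finset.mem_univ]
      exact Finset.sum_congr rfl fun b _ => congrArg (fun z => (starRingEnd ℂ) (v b) * z) (hmv (a, b))
    have key2 : ∀ b, (∑ a : A, star (v b) * ∑ b', X (a, b) (a, b') * v b')
        = star (v b) * ∑ b', (∑ a : A, X (a, b) (a, b')) * v b' := by
      intro b
      rw [← Finset.mul_sum]
      congr 1
      rw [Finset.sum_comm]
      exact Finset.sum_congr rfl fun b' _ => (Finset.sum_mul _ _ _).symm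
    have key : dotProduct (star v) (ptrA X *ᵥ v)
        = ∑ a : A, dotProduct (star (w a)) (X *ᵥ w a) := by
      calc dotProduct (star v) (ptrA X *ᵥ v)
          = ∑ b, star (v b) * ∑ b', (∑ a : A, X (a, b) (a, b')) * v b' := by
            simp only [dotProduct, Matrix.mulVec, ptrA, Matrix.of_apply, Pi.star_apply]
        _ = ∑ b, ∑ a : A, star (v b) * ∑ b', X (a, b) (a, b') * v b' :=
            Finset.sum_congr rfl fun b _ => (key2 b).symm
        _ = ∑ a : A, ∑ b, star (v b) * ∑ b', X (a, b) (a, b') * v b' := Finset.sum_comm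
        _ = ∑ a : A, dotProduct (star (w a)) (X *ᵥ w a) :=
            Finset.sum_congr rfl fun a _ => (ha a).symm
    rw [key]
    exact Finset.sum_nonneg fun a _ => (Matrix.posSemidef_iff_dotProduct_mulVec.mp hX).2 _

end Aux4

lemma key_ineq {ι κ : Type*} [Fintype ι] [Fintype κ] {lam : ℝ} (hlam : 1 < lam)
    (m : ι → ℝ) (hm : ∀ i, 0 ≤ m i) (s : κ → ℝ) (hs : ∀ j, 0 < s j)
    (P : ι → κ → ℝ) (hP : ∀ i j, 0 ≤ P i j)
    (hProw : ∀ i, ∑ j, P i j = 1) (hPcol : ∀ j, ∑ i, P i j = 1) (hs1 : ∑ j, s j = 1) :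
    (∑ i, m i ^ (1 / lam)) ^ lam ≤ ∑ i, ∑ j, m i * s j ^ (1 - lam) * P i j := by
  have hlam0 : lam ≠ 0 := by linarith
  have hlampos : (0 : ℝ) < lam := by linarith
  set q : ℝ := lam / (lam - 1) with hqdef
  have hpq : lam.HolderConjugate q := Real.HolderConjugate.conjExponent hlam
  have hq0 : q ≠ 0 := ne_of_gt hpq.symm.pos
  have hq : 1 / q = (lam - 1) / lam := by rw [hqdef, one_div_div]
  set f : ι × κ → ℝ := fun p => (P p.1 p.2 * (m p.1 * s p.2 ^ (1 - lam))) ^ (1 / lam) with hf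
  set g : ι × κ → ℝ := fun p => (P p.1 p.2 * s p.2) ^ (1 / q) with hg
  have hf0 : ∀ p ∈ Finset.univ, (0:ℝ) ≤ f p := fun p _ =>
    Real.rpow_nonneg (mul_nonneg (hP _ _) (mul_nonneg (hm _) (Real.rpow_nonneg (hs _).le _))) _
  have hg0 : ∀ p ∈ Finset.univ, (0:ℝ) ≤ g p := fun p _ =>
    Real.rpow_nonneg (mul_nonneg (hP _ _) (hs _).le) _
  have holder := Real.inner_le_Lp_mul_Lq_of_nonneg Finset.univ hpq hf0 hg0
  have hfg : ∀ p : ι × κ, f p * g p = P p.1 p.2 * m p.1 ^ (1 / lam) := by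
    rintro ⟨i, j⟩
    rcases eq_or_lt_of_le (hP i j) with h0 | hpos
    · simp [hf, hg, ← h0]
      exact Or.inl (Real.zero_rpow (inv_ne_zero hlam0))
    · have e1 : (s j ^ (1 - lam)) ^ (1 / lam) = s j ^ ((1 - lam) * (1 / lam)) :=
        (Real.rpow_mul (hs j).le _ _).symm
      have hsumexp : 1 / lam + 1 / q = 1 := by
        have h := hpq.inv_add_inv_eq_one
        rwa [inv_eq_one_div, inv_eq_one_div] at h
      have e2 : P i j ^ (1 / lam) * P i j ^ (1 / q) = P i j := by
        rw [← Real.rpow_add hpos, hsumexp, Real.rpow_one]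
      have e3 : s j ^ ((1 - lam) * (1 / lam)) * s j ^ (1 / q) = 1 := by
        rw [← Real.rpow_add (hs j), hq,
          show (1 - lam) * (1 / lam) + (lam - 1) / lam = 0 by field_simp; ring]
        exact Real.rpow_zero _
      simp only [hf, hg]
      rw [Real.mul_rpow hpos.le (mul_nonneg (hm _) (Real.rpow_nonneg (hs _).le _)),
        Real.mul_rpow (hm _) (Real.rpow_nonneg (hs _).le _),
        Real.mul_rpow hpos.le (hs _).le, e1]
      calc P i j ^ (1 / lam) * (m i ^ (1 / lam) * s j ^ ((1 - lam) * (1 / lam))) *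
            (P i j ^ (1 / q) * s j ^ (1 / q))
          = (P i j ^ (1 / lam) * P i j ^ (1 / q)) *
              ((s j ^ ((1 - lam) * (1 / lam)) * s j ^ (1 / q)) * m i ^ (1 / lam)) := by ring
        _ = P i j * m i ^ (1 / lam) := by rw [e2, e3, one_mul]
  have hfl : ∀ p : ι × κ, f p ^ lam = P p.1 p.2 * (m p.1 * s p.2 ^ (1 - lam)) := by
    intro p
    rw [hf, one_div, Real.rpow_inv_rpow
      (mul_nonneg (hP _ _) (mul_nonneg (hm _) (Real.rpow_nonneg (hs _).le _))) hlam0]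
  have hgq : ∀ p : ι × κ, g p ^ q = P p.1 p.2 * s p.2 := by
    intro p
    rw [hg, one_div, Real.rpow_inv_rpow (mul_nonneg (hP _ _) (hs _).le) hq0]
  have hsum1 : (∑ p : ι × κ, f p * g p) = ∑ i, m i ^ (1 / lam) := by
    simp only [hfg]
    rw [Fintype.sum_prod_type]
    refine Finset.sum_congr rfl fun i _ => ?_
    show (∑ j, P i j * m i ^ (1 / lam)) = m i ^ (1 / lam)
    rw [← Finset.sum_mul, hProw i, one_mul]
  have hsum2 : (∑ p : ι × κ, g p ^ q) = 1 := by
    simp only [hgq]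
    rw [Fintype.sum_prod_type, Finset.sum_comm, ← hs1]
    refine Finset.sum_congr rfl fun j _ => ?_
    show (∑ i, P i j * s j) = s j
    rw [← Finset.sum_mul, hPcol j, one_mul]
  have hsum3 : (∑ p : ι × κ, f p ^ lam) = ∑ i, ∑ j, m i * s j ^ (1 - lam) * P i j := by
    simp only [hfl]
    rw [Fintype.sum_prod_type]
    exact Finset.sum_congr rfl fun i _ => Finset.sum_congr rfl fun j _ => by ring
  rw [hsum1, hsum2, hsum3, Real.one_rpow, mul_one] at holder
  have hR0 : (0:ℝ) ≤ ∑ i, ∑ j, m i * s j ^ (1 - lam) * P i j := by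
    rw [← hsum3]
    exact Finset.sum_nonneg fun p _ => Real.rpow_nonneg (hf0 p (Finset.mem_univ p)) _
  calc (∑ i, m i ^ (1 / lam)) ^ lam
      ≤ ((∑ i, ∑ j, m i * s j ^ (1 - lam) * P i j) ^ (1 / lam)) ^ lam :=
        Real.rpow_le_rpow (Finset.sum_nonneg fun i _ => Real.rpow_nonneg (hm i) _)
          holder hlampos.le
    _ = ∑ i, ∑ j, m i * s j ^ (1 - lam) * P i j := by
        rw [one_div, Real.rpow_inv_rpow hR0 hlam0]


set_option maxHeartbeats 1000000 in
/-- Closed form of `K_λ(A⟩B)_ρ`: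

the infimum over positive definite density matrices `σ` on `B` of
`D_λ(ρ ‖ 1_A⊗σ)` equals `(λ/(λ−1))·ln Tr[(Tr_A ρ^λ)^{1/λ}]`. -/
theorem Kinf_closed_form
    {A B : Type*} [Fintype A] [Fintype B] [DecidableEq A] [DecidableEq B]
    [Nonempty A] [Nonempty B]
    (lam : ℝ) (hlam : 1 < lam)
    (ρ : Matrix (A × B) (A × B) ℂ) (hρ : ρ.PosSemidef ∧ ρ.trace = 1) :
    Kinf lam ρ =
      (lam / (lam - 1)) * Real.log (trR (mpow (ptrA (mpow ρ lam)) (1 / lam))) := by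
  classical
  obtain ⟨hρpsd, hρtr⟩ := hρ
  have hlam0 : lam ≠ 0 := by linarith
  have h1ml : (1 : ℝ) - lam ≠ 0 := by linarith
  have hinvlam : (1 : ℝ) / lam ≠ 0 := one_div_ne_zero hlam0
  have hHρ : ρ.IsHermitian := hρpsd.1
  set Uρ : Matrix (A × B) (A × B) ℂ := (hHρ.eigenvectorUnitary : Matrix (A × B) (A × B) ℂ)
    with hUρdef
  have hUρu : Uρ ∈ Matrix.unitaryGroup (A × B) ℂ := hHρ.eigenvectorUnitary.2
  set e : (A × B) → ℝ := hHρ.eigenvalues with hedef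
  have he0 : ∀ i, 0 ≤ e i := fun i => hρpsd.eigenvalues_nonneg i
  have hρspec : ρ = Uρ * Matrix.diagonal (fun i => (e i : ℂ)) * star Uρ := hHρ.spectral_theorem
  have hmpowρ : mpow ρ lam = Uρ * Matrix.diagonal (fun i => ((e i ^ lam : ℝ) : ℂ)) * star Uρ := by
    conv_lhs => rw [hρspec]
    exact mpow_conj Uρ hUρu e lam hlam0
  have hpsd_pow : (mpow ρ lam).PosSemidef := by
    rw [hmpowρ]
    have hd : (Matrix.diagonal (fun i => ((e i ^ lam : ℝ) : ℂ))).PosSemidef := by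
      refine Matrix.PosSemidef.diagonal ?_
      intro i
      simp only [Pi.zero_apply]
      have : (0:ℝ) ≤ e i ^ lam := Real.rpow_nonneg (he0 i) lam
      exact_mod_cast this
    have h2 := hd.mul_mul_conjTranspose_same Uρ
    simpa [Matrix.star_eq_conjTranspose] using h2
  set M : Matrix B B ℂ := ptrA (mpow ρ lam) with hMdef
  have hMpsd : M.PosSemidef := ptrA_posSemidef hpsd_pow
  have hHM : M.IsHermitian := hMpsd.1
  set V : Matrix B B ℂ := (hHM.eigenvectorUnitary : Matrix B B ℂ) with hVdef
  have hVu : V ∈ Matrix.unitaryGroup B ℂ := hHM.eigenvectorUnitary.2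
  set mv : B → ℝ := hHM.eigenvalues with hmvdef
  have hm0 : ∀ i, 0 ≤ mv i := fun i => hMpsd.eigenvalues_nonneg i
  have hMspec : M = V * Matrix.diagonal (fun i => (mv i : ℂ)) * star V := hHM.spectral_theorem
  set c : ℝ := ∑ i, mv i ^ (1 / lam) with hcdef
  -- trR (mpow M (1/lam)) = c
  have hRHSc : trR (mpow M (1 / lam)) = c := by
    have h1 : mpow M (1 / lam)
        = V * Matrix.diagonal (fun i => ((mv i ^ (1 / lam) : ℝ) : ℂ)) * star V := by
      conv_lhs => rw [hMspec]
      exact mpow_conj V hVu mv (1 / lam) hinvlam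
    rw [trR, h1, trace_conj V hVu,
      show (∑ i, ((mv i ^ (1 / lam) : ℝ) : ℂ)) = ((c : ℝ) : ℂ) by rw [hcdef]; push_cast; rfl,
      Complex.ofReal_re]
  -- positivity of c
  have htre : ∑ i, e i = 1 := by
    have h1 : Matrix.trace ρ = ((∑ i, e i : ℝ) : ℂ) := by
      rw [hρspec, trace_conj Uρ hUρu]
      push_cast
      rfl
    rw [hρtr] at h1
    exact_mod_cast h1.symm
  have htrM : ∑ i, mv i = ∑ i, e i ^ lam := by
    have h1 : Matrix.trace M = Matrix.trace (mpow ρ lam) := ptrA_trace _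
    rw [hMspec, trace_conj V hVu, hmpowρ, trace_conj Uρ hUρu] at h1
    have h2 : ((∑ i, mv i : ℝ) : ℂ) = ((∑ i, e i ^ lam : ℝ) : ℂ) := by
      push_cast
      exact h1
    exact_mod_cast h2
  have hcpos : 0 < c := by
    have hepos : ∃ i, 0 < e i := by
      by_contra h
      push_neg at h
      have : ∑ i, e i = 0 := Finset.sum_eq_zero fun i _ => le_antisymm (h i) (he0 i)
      rw [htre] at this
      norm_num at this
    obtain ⟨i0, hi0⟩ := hepos
    have hsum : 0 < ∑ i, mv i := by
      rw [htrM]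
      exact Finset.sum_pos' (fun i _ => Real.rpow_nonneg (he0 i) lam)
        ⟨i0, Finset.mem_univ _, Real.rpow_pos_of_pos hi0 lam⟩
    have hmex : ∃ j, 0 < mv j := by
      by_contra h
      push_neg at h
      have : ∑ i, mv i = 0 := Finset.sum_eq_zero fun i _ => le_antisymm (h i) (hm0 i)
      rw [this] at hsum
      norm_num at hsum
    obtain ⟨j0, hj0⟩ := hmex
    exact Finset.sum_pos' (fun i _ => Real.rpow_nonneg (hm0 i) _)
      ⟨j0, Finset.mem_univ _, Real.rpow_pos_of_pos hj0 _⟩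
  set R : ℝ := lam / (lam - 1) * Real.log c with hRdef
  rw [hRHSc]
  -- the value of renyiD at a conjugated sigma
  have hval : ∀ (Vs : Matrix B B ℂ), Vs ∈ Matrix.unitaryGroup B ℂ → ∀ (s : B → ℝ),
      trR (mpow ρ lam *
          mpow ((1 : Matrix A A ℂ) ⊗ₖ (Vs * Matrix.diagonal (fun j => (s j : ℂ)) * star Vs))
            (1 - lam))
        = ∑ i, ∑ j, mv i * s j ^ (1 - lam) * Complex.normSq ((star V * Vs) i j) := by
    intro Vs hVs s
    have hk : (1 : Matrix A A ℂ) ⊗ₖ (Vs * Matrix.diagonal (fun j => (s j : ℂ)) * star Vs)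
        = ((1 : Matrix A A ℂ) ⊗ₖ Vs) *
            Matrix.diagonal (fun p : A × B => ((s p.2 : ℝ) : ℂ)) *
            star ((1 : Matrix A A ℂ) ⊗ₖ Vs) := by
      rw [star_kron, (one_kron_diag (A := A) (fun j => ((s j : ℝ) : ℂ))).symm,
        ← Matrix.mul_kronecker_mul, ← Matrix.mul_kronecker_mul]
      simp [Matrix.star_eq_conjTranspose]
    have h2 : mpow ((1 : Matrix A A ℂ) ⊗ₖ (Vs * Matrix.diagonal (fun j => (s j : ℂ)) * star Vs))
          (1 - lam)
        = ((1 : Matrix A A ℂ) ⊗ₖ Vs) *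
            Matrix.diagonal (fun p : A × B => ((s p.2 ^ (1 - lam) : ℝ) : ℂ)) *
            star ((1 : Matrix A A ℂ) ⊗ₖ Vs) := by
      rw [hk]
      exact mpow_conj _ (one_kron_unitary hVs) (fun p : A × B => s p.2) _ h1ml
    have h3 : ((1 : Matrix A A ℂ) ⊗ₖ Vs) *
          Matrix.diagonal (fun p : A × B => ((s p.2 ^ (1 - lam) : ℝ) : ℂ)) *
          star ((1 : Matrix A A ℂ) ⊗ₖ Vs)
        = (1 : Matrix A A ℂ) ⊗ₖ
            (Vs * Matrix.diagonal (fun j => ((s j ^ (1 - lam) : ℝ) : ℂ)) * star Vs) := by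
      rw [star_kron, (one_kron_diag (A := A) (fun j => ((s j ^ (1 - lam) : ℝ) : ℂ))).symm,
        ← Matrix.mul_kronecker_mul, ← Matrix.mul_kronecker_mul]
      simp [Matrix.star_eq_conjTranspose]
    rw [trR, h2, h3, trace_mul_one_kron, ← hMdef, hMspec]
    exact trace_conj_pair V Vs mv (fun j => s j ^ (1 - lam))
  -- lower bound
  have hlow : ∀ σ : {σ : Matrix B B ℂ // σ.PosDef ∧ σ.trace = 1},
      R ≤ renyiD lam ρ ((1 : Matrix A A ℂ) ⊗ₖ (σ : Matrix B B ℂ)) := by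
    rintro ⟨σ, hσpd, hσtr⟩
    have hHσ : σ.IsHermitian := hσpd.1
    set Vs : Matrix B B ℂ := (hHσ.eigenvectorUnitary : Matrix B B ℂ) with hVsdef
    have hVsu : Vs ∈ Matrix.unitaryGroup B ℂ := hHσ.eigenvectorUnitary.2
    set s : B → ℝ := hHσ.eigenvalues with hsdef
    have hs : ∀ j, 0 < s j := fun j => hσpd.eigenvalues_pos j
    have hσspec : σ = Vs * Matrix.diagonal (fun j => (s j : ℂ)) * star Vs :=
      hHσ.spectral_theorem
    have hs1 : ∑ j, s j = 1 := by
      have h1 : Matrix.trace σ = ((∑ j, s j : ℝ) : ℂ) := by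
        rw [hσspec, trace_conj Vs hVsu]
        push_cast
        rfl
      rw [hσtr] at h1
      exact_mod_cast h1.symm
    set W : Matrix B B ℂ := star V * Vs with hWdef
    have hW1 : W * star W = 1 := by
      rw [hWdef, Matrix.star_mul, star_star]
      calc star V * Vs * (star Vs * V)
          = star V * (Vs * star Vs) * V := by noncomm_ring
        _ = 1 := by
            rw [Matrix.mem_unitaryGroup_iff.mp hVsu, Matrix.mul_one,
              Matrix.mem_unitaryGroup_iff'.mp hVu]
    have hW2 : star W * W = 1 := by
      rw [hWdef, Matrix.star_mul, star_star]
      calc star Vs * V * (star V * Vs)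
          = star Vs * (V * star V) * Vs := by noncomm_ring
        _ = 1 := by
            rw [Matrix.mem_unitaryGroup_iff.mp hVu, Matrix.mul_one,
              Matrix.mem_unitaryGroup_iff'.mp hVsu]
    have hkey := key_ineq hlam mv hm0 s hs (fun i j => Complex.normSq (W i j))
      (fun i j => Complex.normSq_nonneg _) (fun i => unitary_row_sum hW1 i)
      (fun j => unitary_col_sum hW2 j) hs1
    have hTval : trR (mpow ρ lam * mpow ((1 : Matrix A A ℂ) ⊗ₖ σ) (1 - lam))
        = ∑ i, ∑ j, mv i * s j ^ (1 - lam) * Complex.normSq (W i j) := by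
      conv_lhs => rw [hσspec]
      exact hval Vs hVsu s
    rw [renyiD, hTval]
    have hclam : (0:ℝ) < c ^ lam := Real.rpow_pos_of_pos hcpos lam
    have hlog := Real.log_le_log hclam hkey
    rw [Real.log_rpow hcpos] at hlog
    have hcoef : (0:ℝ) ≤ 1 / (lam - 1) := le_of_lt (div_pos one_pos (by linarith))
    calc R = 1 / (lam - 1) * (lam * Real.log c) := by rw [hRdef]; ring
      _ ≤ 1 / (lam - 1) * Real.log (∑ i, ∑ j, mv i * s j ^ (1 - lam)
            * Complex.normSq (W i j)) := by
          exact mul_le_mul_of_nonneg_left hlog hcoef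
  -- the approximating family
  have hcard : (0:ℝ) ≤ (Fintype.card B : ℝ) := by positivity
  set cd : ℝ → ℝ := fun δ => c + δ * (Fintype.card B) with hcddef
  have hcdeq : ∀ δ : ℝ, cd δ = c + δ * (Fintype.card B) := fun δ => rfl
  have hcdpos : ∀ δ : ℝ, 0 < δ → 0 < cd δ := fun δ hδ => by
    have h1 : (0:ℝ) ≤ δ * Fintype.card B := mul_nonneg hδ.le hcard
    rw [hcdeq]
    linarith
  set dv : ℝ → B → ℝ := fun δ j => (mv j ^ (1 / lam) + δ) / cd δ with hdvdef
  have hdveq : ∀ (δ : ℝ) (j : B), dv δ j = (mv j ^ (1 / lam) + δ) / cd δ := fun δ j => rfl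
  have hdvpos : ∀ δ : ℝ, 0 < δ → ∀ j, 0 < dv δ j := fun δ hδ j =>
    div_pos (by have := Real.rpow_nonneg (hm0 j) (1 / lam); linarith) (hcdpos δ hδ)
  have hdvsum : ∀ δ : ℝ, 0 < δ → ∑ j, dv δ j = 1 := by
    intro δ hδ
    have hne : cd δ ≠ 0 := (hcdpos δ hδ).ne'
    simp only [hdveq]
    rw [← Finset.sum_div, Finset.sum_add_distrib, Finset.sum_const, ← hcdef, nsmul_eq_mul,
      div_eq_one_iff_eq hne, hcdeq]
    rw [show (Finset.univ.card : ℝ) = (Fintype.card B : ℝ) from rfl]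
    ring
  set σδ : ℝ → Matrix B B ℂ := fun δ =>
    V * Matrix.diagonal (fun j => ((dv δ j : ℝ) : ℂ)) * star V with hσδdef
  have hσδpd : ∀ δ : ℝ, 0 < δ → (σδ δ).PosDef := fun δ hδ =>
    posDef_conj V hVu _ (hdvpos δ hδ)
  have hσδtr : ∀ δ : ℝ, 0 < δ → (σδ δ).trace = 1 := by
    intro δ hδ
    rw [hσδdef]
    dsimp only
    rw [trace_conj V hVu,
      show (∑ j, ((dv δ j : ℝ) : ℂ)) = ((∑ j, dv δ j : ℝ) : ℂ) by push_cast; rfl,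
      hdvsum δ hδ]
    norm_num
  set G : ℝ → ℝ := fun δ => ∑ j, mv j * (dv δ j) ^ (1 - lam) with hGdef
  have hFval : ∀ δ : ℝ, 0 < δ →
      renyiD lam ρ ((1 : Matrix A A ℂ) ⊗ₖ σδ δ) = 1 / (lam - 1) * Real.log (G δ) := by
    intro δ hδ
    rw [renyiD, hσδdef]
    dsimp only
    rw [hval V hVu (dv δ)]
    congr 2
    rw [Matrix.mem_unitaryGroup_iff'.mp hVu]
    show (∑ i, ∑ j, mv i * dv δ j ^ (1 - lam) * Complex.normSq ((1 : Matrix B B ℂ) i j))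
        = ∑ j, mv j * (dv δ j) ^ (1 - lam)
    refine Finset.sum_congr rfl fun i _ => ?_
    rw [Finset.sum_eq_single i]
    · rw [Matrix.one_apply_eq]
      simp
    · intro j _ hj
      rw [Matrix.one_apply_ne (Ne.symm hj)]
      simp
    · intro h
      exact absurd (Finset.mem_univ i) h
  -- limit of G
  have hGlim : Filter.Tendsto G (nhdsWithin 0 (Set.Ioi 0)) (nhds (c ^ lam)) := by
    have hterm : ∀ j : B, Filter.Tendsto (fun δ => mv j * (dv δ j) ^ (1 - lam))
        (nhdsWithin 0 (Set.Ioi 0)) (nhds (mv j ^ (1 / lam) * c ^ (lam - 1))) := by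
      intro j
      rcases eq_or_lt_of_le (hm0 j) with h0 | hpos
      · have hz : (fun δ => mv j * (dv δ j) ^ (1 - lam)) = fun _ => 0 := by
          funext δ
          rw [← h0, zero_mul]
        rw [hz, ← h0, Real.zero_rpow hinvlam, zero_mul]
        exact tendsto_const_nhds
      · have hbase : Filter.Tendsto (fun δ => dv δ j) (nhdsWithin 0 (Set.Ioi 0))
            (nhds (mv j ^ (1 / lam) / c)) := by
          have hcont : ContinuousAt (fun δ : ℝ => (mv j ^ (1 / lam) + δ) / (c + δ * (Fintype.card B))) 0 := by
            apply ContinuousAt.div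
            · fun_prop
            · fun_prop
            · norm_num
              exact ne_of_gt hcpos
          have := hcont.tendsto
          rw [show (mv j ^ (1 / lam) + 0) / (c + 0 * (Fintype.card B))
              = mv j ^ (1 / lam) / c by norm_num] at this
          exact this.mono_left nhdsWithin_le_nhds
        have hbpos : 0 < mv j ^ (1 / lam) / c :=
          div_pos (Real.rpow_pos_of_pos hpos _) hcpos
        have hrpow : Filter.Tendsto (fun δ => (dv δ j) ^ (1 - lam))
            (nhdsWithin 0 (Set.Ioi 0)) (nhds ((mv j ^ (1 / lam) / c) ^ (1 - lam))) := by
          have hc2 : ContinuousAt (fun x : ℝ => x ^ (1 - lam)) (mv j ^ (1 / lam) / c) :=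
            Real.continuousAt_rpow_const _ _ (Or.inl (ne_of_gt hbpos))
          exact hc2.tendsto.comp hbase
        have hev : mv j * ((mv j ^ (1 / lam) / c) ^ (1 - lam))
            = mv j ^ (1 / lam) * c ^ (lam - 1) := by
          rw [Real.div_rpow (Real.rpow_nonneg (hm0 j) _) hcpos.le,
            ← Real.rpow_mul (hm0 j), div_eq_mul_inv, ← Real.rpow_neg hcpos.le,
            show -(1 - lam) = lam - 1 by ring, ← mul_assoc]
          congr 1
          calc mv j * mv j ^ (1 / lam * (1 - lam))
              = mv j ^ (1:ℝ) * mv j ^ (1 / lam * (1 - lam)) := by rw [Real.rpow_one]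
            _ = mv j ^ (1 + 1 / lam * (1 - lam)) := (Real.rpow_add hpos _ _).symm
            _ = mv j ^ (1 / lam) := by
                congr 1
                field_simp
                ring
        rw [← hev]
        exact hrpow.const_mul _
    have hsumt : (∑ j, mv j ^ (1 / lam) * c ^ (lam - 1)) = c ^ lam := by
      rw [← Finset.sum_mul, ← hcdef]
      calc c * c ^ (lam - 1) = c ^ (1:ℝ) * c ^ (lam - 1) := by rw [Real.rpow_one]
        _ = c ^ (1 + (lam - 1)) := (Real.rpow_add hcpos _ _).symm
        _ = c ^ lam := by norm_num
    rw [hGdef, ← hsumt]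
    exact tendsto_finset_sum _ fun j _ => hterm j
  -- conclude upper bound
  have hBdd : BddBelow (Set.range fun σ : {σ : Matrix B B ℂ // σ.PosDef ∧ σ.trace = 1} =>
      renyiD lam ρ ((1 : Matrix A A ℂ) ⊗ₖ (σ : Matrix B B ℂ))) := by
    refine ⟨R, ?_⟩
    rintro x ⟨σ, rfl⟩
    exact hlow σ
  haveI hNE : Nonempty {σ : Matrix B B ℂ // σ.PosDef ∧ σ.trace = 1} :=
    ⟨⟨σδ 1, hσδpd 1 one_pos, hσδtr 1 one_pos⟩⟩
  have hub : Kinf lam ρ ≤ R := by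
    have hloglim : Filter.Tendsto (fun δ => 1 / (lam - 1) * Real.log (G δ))
        (nhdsWithin 0 (Set.Ioi 0)) (nhds R) := by
      have hlogc : Filter.Tendsto (fun δ => Real.log (G δ)) (nhdsWithin 0 (Set.Ioi 0))
          (nhds (Real.log (c ^ lam))) :=
        ((Real.continuousAt_log (ne_of_gt (Real.rpow_pos_of_pos hcpos lam))).tendsto).comp hGlim
      have := hlogc.const_mul (1 / (lam - 1))
      rw [Real.log_rpow hcpos] at this
      rw [show R = 1 / (lam - 1) * (lam * Real.log c) by rw [hRdef]; ring]
      exact this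
    refine ge_of_tendsto hloglim ?_
    filter_upwards [self_mem_nhdsWithin] with δ hδ
    have hδ' : (0:ℝ) < δ := hδ
    have hle : Kinf lam ρ ≤ renyiD lam ρ ((1 : Matrix A A ℂ) ⊗ₖ σδ δ) := by
      rw [Kinf]
      exact ciInf_le hBdd ⟨σδ δ, hσδpd δ hδ', hσδtr δ hδ'⟩
    rw [hFval δ hδ'] at hle
    exact hle
  have hlb : R ≤ Kinf lam ρ := by
    rw [Kinf]
    exact le_ciInf hlow
  exact le_antisymm hub hlb
end

section
/- (Orthogonal additivity of the trace of the positive part.) Let n be a nonempty finite type, I a finite index type, and (X_i)_{i∈I} Hermitian matrices indexed by n such that X_i·X_j = 0 for all i ≠ j. Then Tr( (∑_{i∈I} X_i)⁺ ) = ∑_{i∈I} Tr( X_i⁺ ), where for a Hermitian matrix X, Tr(X⁺) denotes the sum of max(μ, 0) over the eigenvalues μ of X. -/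
open scoped Kronecker
open Matrix
open scoped ComplexOrder

section AuxTrPos

variable {n : Type*} [Fintype n] [DecidableEq n]

lemma matFun_eq {M : Matrix n n ℂ} (h : M.IsHermitian) (f : ℝ → ℝ) :
    matFun M f = (h.eigenvectorUnitary : Matrix n n ℂ) *
      Matrix.diagonal (fun i => (f (h.eigenvalues i) : ℂ)) *
      (star (h.eigenvectorUnitary : Matrix n n ℂ)) := dif_pos h

set_option maxHeartbeats 1000000 in
lemma matFun_mul {M : Matrix n n ℂ} (h : M.IsHermitian) (f g : ℝ → ℝ) :
    matFun M f * matFun M g = matFun M (fun x => f x * g x) := by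
  rw [matFun_eq h, matFun_eq h, matFun_eq h]
  have hU : (star (h.eigenvectorUnitary : Matrix n n ℂ)) *
      (h.eigenvectorUnitary : Matrix n n ℂ) = 1 :=
    mem_unitaryGroup_iff'.mp h.eigenvectorUnitary.2
  simp only [mul_assoc]
  rw [← mul_assoc (star (h.eigenvectorUnitary : Matrix n n ℂ)), hU, one_mul,
    ← mul_assoc (Matrix.diagonal _), diagonal_mul_diagonal]
  norm_cast

lemma matFun_id {M : Matrix n n ℂ} (h : M.IsHermitian) :
    matFun M (fun x => x) = M := by
  rw [matFun_eq h]; exact h.spectral_theorem.symm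

set_option maxHeartbeats 1000000 in
lemma matFun_sub {M : Matrix n n ℂ} (h : M.IsHermitian) (f g : ℝ → ℝ) :
    matFun M f - matFun M g = matFun M (fun x => f x - g x) := by
  rw [matFun_eq h, matFun_eq h, matFun_eq h, ← sub_mul, ← mul_sub, diagonal_sub]
  push_cast
  ring_nf

lemma matFun_zero_of {M : Matrix n n ℂ} (h : M.IsHermitian) (f : ℝ → ℝ)
    (hf : ∀ x, f x = 0) : matFun M f = 0 := by
  rw [matFun_eq h]
  simp [hf]

lemma trace_matFun {M : Matrix n n ℂ} (h : M.IsHermitian) (f : ℝ → ℝ) :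
    (matFun M f).trace = ((∑ i, f (h.eigenvalues i) : ℝ) : ℂ) := by
  rw [matFun_eq h, trace_mul_cycle,
    mem_unitaryGroup_iff'.mp h.eigenvectorUnitary.2, one_mul, trace_diagonal]
  push_cast; ring

lemma matFun_posSemidef {M : Matrix n n ℂ} (h : M.IsHermitian) (f : ℝ → ℝ)
    (hf : ∀ x, 0 ≤ f x) : (matFun M f).PosSemidef := by
  rw [matFun_eq h]
  have : Matrix.PosSemidef (Matrix.diagonal (fun i => (f (h.eigenvalues i) : ℂ))) := by
    rw [posSemidef_diagonal_iff]
    intro i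
    exact_mod_cast hf _
  simpa [Matrix.star_eq_conjTranspose] using this.mul_mul_conjTranspose_same (h.eigenvectorUnitary : Matrix n n ℂ)

lemma matFun_mul_self {M : Matrix n n ℂ} (h : M.IsHermitian) (f : ℝ → ℝ) :
    matFun M f * M = matFun M (fun x => f x * x) := by
  have h1 : matFun M f * matFun M (fun x => x) = matFun M (fun x => f x * x) :=
    matFun_mul h f _
  rwa [matFun_id h] at h1

lemma self_mul_matFun {M : Matrix n n ℂ} (h : M.IsHermitian) (f : ℝ → ℝ) :
    M * matFun M f = matFun M (fun x => x * f x) := by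
  have h1 : matFun M (fun x => x) * matFun M f = matFun M (fun x => x * f x) :=
    matFun_mul h _ f
  rwa [matFun_id h] at h1

lemma matFun_mul_matFun_of_orth {M N : Matrix n n ℂ} (hM : M.IsHermitian)
    (hN : N.IsHermitian) (hMN : M * N = 0) (f g : ℝ → ℝ)
    (hf : f 0 = 0) (hg : g 0 = 0) : matFun M f * matFun N g = 0 := by
  set f' : ℝ → ℝ := fun x => if x = 0 then 0 else f x / x with hf'
  set g' : ℝ → ℝ := fun x => if x = 0 then 0 else g x / x with hg'
  have hfe : matFun M f = matFun M f' * M := by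
    rw [matFun_mul_self hM f']
    have hfg : (fun x => f' x * x) = f := by
      funext x
      by_cases hx : x = 0
      · simp [hf', hx, hf]
      · simp [hf', hx, div_mul_cancel₀ _ hx]
    rw [hfg]
  have hge : matFun N g = N * matFun N g' := by
    rw [self_mul_matFun hN g']
    have hfg : (fun x => x * g' x) = g := by
      funext x
      by_cases hx : x = 0
      · simp [hg', hx, hg]
      · simp only [hg', hx, ↓reduceIte]
        field_simp
    rw [hfg]
  rw [hfe, hge, mul_assoc, ← mul_assoc M, hMN, zero_mul, mul_zero]

lemma isHermitian_sum_of {I : Type*} [Fintype I] (X : I → Matrix n n ℂ)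
    (hherm : ∀ i, (X i).IsHermitian) : (∑ i, X i).IsHermitian := by
  unfold Matrix.IsHermitian
  rw [conjTranspose_sum]
  exact Finset.sum_congr rfl fun i _ => hherm i

end AuxTrPos

/-- Orthogonal additivity of the trace of the positive part:
for pairwise orthogonal Hermitian matrices, `Tr((∑ X_i)⁺) = ∑ Tr(X_i⁺)`. -/
theorem trPos_orthogonal_additivity
    {n : Type*} [Fintype n] [DecidableEq n] [Nonempty n]
    {I : Type*} [Fintype I]
    (X : I → Matrix n n ℂ)
    (hherm : ∀ i, (X i).IsHermitian)
    (horth : ∀ i j, i ≠ j → X i * X j = 0) :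
    trPos (∑ i, X i) = ∑ i, trPos (X i) := by
  classical
  have pos0 : max (0:ℝ) 0 = 0 := max_self 0
  have neg0 : max (-(0:ℝ)) 0 = 0 := by simp
  have hS : (∑ i, X i).IsHermitian := isHermitian_sum_of X hherm
  set S : Matrix n n ℂ := ∑ i, X i with hSdef
  set P : Matrix n n ℂ := ∑ i, matFun (X i) (fun x => max x 0) with hPdef
  set N : Matrix n n ℂ := ∑ i, matFun (X i) (fun x => max (-x) 0) with hNdef
  set Q : Matrix n n ℂ := matFun S (fun x => max x 0) with hQdef
  set M : Matrix n n ℂ := matFun S (fun x => max (-x) 0) with hMdef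
  have hposneg : ∀ x : ℝ, max x 0 - max (-x) 0 = x := fun x => by
    rcases le_total x 0 with hx | hx
    · rw [max_eq_right hx, max_eq_left (by linarith)]; ring
    · rw [max_eq_left hx, max_eq_right (by linarith)]; ring
  have hposmulneg : ∀ x : ℝ, max x 0 * max (-x) 0 = 0 := fun x => by
    rcases le_total x 0 with hx | hx
    · rw [max_eq_right hx]; ring
    · rw [max_eq_right (by linarith : -x ≤ 0)]; ring
  -- the decompositions
  have h1 : P - N = S := by
    rw [hPdef, hNdef, ← Finset.sum_sub_distrib]
    refine Finset.sum_congr rfl fun i _ => ?_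
    rw [matFun_sub (hherm i)]
    simp only [hposneg]
    exact matFun_id (hherm i)
  have h1' : Q - M = S := by
    rw [hQdef, hMdef, matFun_sub hS]
    simp only [hposneg]
    exact matFun_id hS
  -- orthogonality
  have horthsym : ∀ i j, i ≠ j → X j * X i = 0 := fun i j hij => by
    have := congrArg Matrix.conjTranspose (horth i j hij)
    rwa [conjTranspose_mul, (hherm i).eq, (hherm j).eq, conjTranspose_zero] at this
  have hcross : ∀ (f g : ℝ → ℝ), f 0 = 0 → g 0 = 0 →
      (∑ i, matFun (X i) f) * (∑ i, matFun (X i) g) =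
        ∑ i, matFun (X i) (fun x => f x * g x) := by
    intro f g hf hg
    rw [Finset.sum_mul_sum]
    refine Finset.sum_congr rfl fun i _ => ?_
    rw [Finset.sum_eq_single i
      (fun j _ hj =>
        matFun_mul_matFun_of_orth (hherm i) (hherm j) (horth i j (Ne.symm hj)) f g hf hg)
      (by simp)]
    exact matFun_mul (hherm i) f g
  have h2 : P * N = 0 := by
    rw [hPdef, hNdef, hcross (fun x => max x 0) (fun x => max (-x) 0) pos0 neg0]
    refine Finset.sum_eq_zero fun i _ => matFun_zero_of (hherm i) _ hposmulneg
  have h3 : N * P = 0 := by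
    rw [hPdef, hNdef, hcross (fun x => max (-x) 0) (fun x => max x 0) neg0 pos0]
    refine Finset.sum_eq_zero fun i _ => matFun_zero_of (hherm i) _ fun x => by
      rw [mul_comm]; exact hposmulneg x
  have h2' : Q * M = 0 := by
    rw [hQdef, hMdef, matFun_mul hS]
    exact matFun_zero_of hS _ hposmulneg
  have h3' : M * Q = 0 := by
    rw [hQdef, hMdef, matFun_mul hS]
    exact matFun_zero_of hS _ fun x => by rw [mul_comm]; exact hposmulneg x
  -- squares agree
  have hsq : ∀ (A B : Matrix n n ℂ), A * B = 0 → B * A = 0 →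
      (A + B) ^ 2 = (A - B) ^ 2 := by
    intro A B hAB hBA
    rw [pow_two, pow_two, add_mul, mul_add, mul_add, sub_mul, mul_sub, mul_sub,
      hAB, hBA]
    abel
  have hsqeq : (P + N) ^ 2 = (Q + M) ^ 2 := by
    rw [hsq P N h2 h3, hsq Q M h2' h3', h1, h1']
  -- positive semidefiniteness
  have hPsd : P.PosSemidef :=
    Finset.sum_induction _ _ (fun a b ha hb => ha.add hb) Matrix.PosSemidef.zero
      (fun i _ => matFun_posSemidef (hherm i) _ fun x => le_max_right x 0)
  have hNsd : N.PosSemidef :=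
    Finset.sum_induction _ _ (fun a b ha hb => ha.add hb) Matrix.PosSemidef.zero
      (fun i _ => matFun_posSemidef (hherm i) _ fun x => le_max_right (-x) 0)
  have hQsd : Q.PosSemidef := matFun_posSemidef hS _ fun x => le_max_right x 0
  have hMsd : M.PosSemidef := matFun_posSemidef hS _ fun x => le_max_right (-x) 0
  have heq : P + N = Q + M := open scoped MatrixOrder in
    (CFC.sq_eq_sq_iff (P + N) (Q + M) (hPsd.add hNsd).nonneg (hQsd.add hMsd).nonneg).mp hsqeq
  have hPQ : P = Q := by
    have hdiff : P - N = Q - M := by rw [h1, h1']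
    have h2P : (2 : ℂ) • P = (2 : ℂ) • Q := by
      rw [two_smul, two_smul]
      calc P + P = (P + N) + (P - N) - N + N - N + N - N + N := by abel
        _ = (Q + M) + (Q - M) - N + N - N + N - N + N := by rw [heq, hdiff]
        _ = Q + Q := by abel
    exact smul_right_injective _ (two_ne_zero) h2P
  -- take traces
  have htr : Matrix.trace P = Matrix.trace Q := by rw [hPQ]
  have htrQ : Matrix.trace Q = ((trPos S : ℝ) : ℂ) := by
    rw [hQdef, trace_matFun hS, trPos, dif_pos hS]
  have htrP : Matrix.trace P = ((∑ i, trPos (X i) : ℝ) : ℂ) := by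
    rw [hPdef, trace_sum]
    push_cast
    refine Finset.sum_congr rfl fun i _ => ?_
    rw [trace_matFun (hherm i), trPos, dif_pos (hherm i)]
  have := htrP.symm.trans (htr.trans htrQ)
  exact_mod_cast this.symm
end
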